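/- If the channel is noiseless, i.e., Y = X, then the Sibson mutual information of order α ∈ (0,1)∪(1,∞) equals the Rényi entropy of order 1/α: I_α^S(X;X) = H_{1/α}(X). -/

import Mathlib

open BigOperators

/-- `p` is a probability distribution on the finite set `X`. -/
def IsDist {X : Type*} [Fintype X] (p : X → ℝ) : Prop :=
  (∀ x, 0 ≤ p x) ∧ ∑ x, p x = 1

/-- The Rényi entropy of order `a` of a distribution `p`. -/
noncomputable def renyi {X : Type*} [Fintype X] (p : X → ℝ) (a : ℝ) : ℝ :=
  (1 / (1 - a)) * Real.log (∑ x, p x ^ a)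

/-- Hölder with exponent split: `∑ a^θ b^(1-θ) ≤ (∑ a)^θ (∑ b)^(1-θ)`. -/
lemma holder_split {X : Type*} [Fintype X] (θ : ℝ) (hθ0 : 0 < θ) (hθ1 : θ < 1)
    (a b : X → ℝ) (ha : ∀ x, 0 ≤ a x) (hb : ∀ x, 0 ≤ b x) :
    ∑ x, a x ^ θ * b x ^ (1 - θ) ≤ (∑ x, a x) ^ θ * (∑ x, b x) ^ (1 - θ) := by
  have h1θ : 0 < 1 - θ := by linarith
  have hpq : Real.HolderConjugate (1/θ) (1/(1-θ)) := by
    rw [Real.holderConjugate_iff]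
    constructor
    · rw [one_lt_div hθ0]; exact hθ1
    · rw [one_div, one_div, inv_inv, inv_inv]; ring
  have key := Real.inner_le_Lp_mul_Lq_of_nonneg Finset.univ hpq
      (f := fun x => a x ^ θ) (g := fun x => b x ^ (1 - θ))
      (fun i _ => Real.rpow_nonneg (ha i) _) (fun i _ => Real.rpow_nonneg (hb i) _)
  have e1 : ∀ x, (a x ^ θ) ^ (1/θ) = a x := fun x => by
    rw [← Real.rpow_mul (ha x), mul_one_div, div_self hθ0.ne', Real.rpow_one]
  have e2 : ∀ x, (b x ^ (1-θ)) ^ (1/(1-θ)) = b x := fun x => by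
    rw [← Real.rpow_mul (hb x), mul_one_div, div_self h1θ.ne', Real.rpow_one]
  simp only [e1, e2] at key
  calc ∑ x, a x ^ θ * b x ^ (1 - θ)
      ≤ (∑ x, a x) ^ (1/(1/θ)) * (∑ x, b x) ^ (1/(1/(1-θ))) := key
    _ = (∑ x, a x) ^ θ * (∑ x, b x) ^ (1 - θ) := by rw [one_div_one_div, one_div_one_div]

theorem sibsonMI_noiseless {X : Type*} [Fintype X] [DecidableEq X]
    (α : ℝ) (hα0 : 0 < α) (hα1 : α ≠ 1)
    (p : X → ℝ) (hp : IsDist p) (hps : ∀ x, 0 < p x) :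
    IsLeast {v : ℝ | ∃ q : X → ℝ, IsDist q ∧ (∀ y, 0 < q y) ∧
        v = (1 / (α - 1)) * Real.log (∑ x, ∑ y,
              (p x * (if y = x then (1 : ℝ) else 0)) ^ α * (p x * q y) ^ (1 - α))}
      (renyi p (1 / α)) := by
  have hXne : Nonempty X := by
    rcases isEmpty_or_nonempty X with h | h
    · exfalso; have := hp.2; simp at this
    · exact h
  -- simplify the double sum
  have hsimp : ∀ q : X → ℝ, (∀ y, 0 < q y) →
      (∑ x, ∑ y, (p x * (if y = x then (1 : ℝ) else 0)) ^ α * (p x * q y) ^ (1 - α))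
        = ∑ x, p x * q x ^ (1 - α) := by
    intro q hq
    refine Finset.sum_congr rfl fun x _ => ?_
    rw [Finset.sum_eq_single x]
    · rw [if_pos rfl, mul_one, Real.mul_rpow (hps x).le (hq x).le, ← mul_assoc,
        ← Real.rpow_add (hps x)]
      have h1 : α + (1 - α) = 1 := by ring
      rw [h1, Real.rpow_one]
    · intro y _ hyx
      rw [if_neg hyx, mul_zero, Real.zero_rpow hα0.ne', zero_mul]
    · intro h; exact absurd (Finset.mem_univ x) h
  set S : ℝ := ∑ x, p x ^ (1/α) with hS
  have hSpos : 0 < S := Finset.sum_pos (fun x _ => Real.rpow_pos_of_pos (hps x) _)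
    Finset.univ_nonempty
  have hα1' : α - 1 ≠ 0 := fun h => hα1 (by linarith)
  have hren : renyi p (1/α) = (α / (α - 1)) * Real.log S := by
    rw [renyi]
    congr 1
    rw [div_eq_div_iff (by intro h; apply hα1; field_simp at h; linarith) hα1']
    field_simp
  constructor
  · -- membership: optimal q
    refine ⟨fun x => p x ^ (1/α) / S,
      ⟨fun x => div_nonneg (Real.rpow_nonneg (hps x).le _) hSpos.le, ?_⟩,
      fun x => div_pos (Real.rpow_pos_of_pos (hps x) _) hSpos, ?_⟩
    · rw [← Finset.sum_div, ← hS, div_self hSpos.ne']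
    · rw [hsimp _ (fun x => div_pos (Real.rpow_pos_of_pos (hps x) _) hSpos)]
      have step : ∀ x, p x * (p x ^ (1/α) / S) ^ (1 - α)
          = p x ^ (1/α) * S ^ (α - 1) := by
        intro x
        have hd : (p x ^ (1/α) / S) ^ (1 - α)
            = p x ^ ((1/α) * (1-α)) * S ^ (α - 1) := by
          rw [Real.div_rpow (Real.rpow_nonneg (hps x).le _) hSpos.le,
            ← Real.rpow_mul (hps x).le, div_eq_mul_inv, ← Real.rpow_neg hSpos.le,
            neg_sub]
        rw [hd, ← mul_assoc]
        congr 1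
        have h1 : (1:ℝ) + (1/α) * (1-α) = 1/α := by field_simp; ring
        calc p x * p x ^ ((1/α) * (1-α))
            = p x ^ (1:ℝ) * p x ^ ((1/α) * (1-α)) := by rw [Real.rpow_one]
          _ = p x ^ ((1:ℝ) + (1/α) * (1-α)) := (Real.rpow_add (hps x) _ _).symm
          _ = p x ^ (1/α) := by rw [h1]
      have key : (∑ x, p x * (p x ^ (1/α) / S) ^ (1 - α)) = S ^ α := by
        rw [Finset.sum_congr rfl (fun x _ => step x), ← Finset.sum_mul, ← hS]
        have h1 : (1:ℝ) + (α - 1) = α := by ring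
        calc S * S ^ (α - 1) = S ^ (1:ℝ) * S ^ (α - 1) := by rw [Real.rpow_one]
          _ = S ^ ((1:ℝ) + (α - 1)) := (Real.rpow_add hSpos _ _).symm
          _ = S ^ α := by rw [h1]
      rw [key, Real.log_rpow hSpos, hren]
      ring
  · -- lower bound
    rintro v ⟨q, hq, hqpos, rfl⟩
    rw [hsimp q hqpos, hren]
    set T : ℝ := ∑ x, p x * q x ^ (1 - α) with hT
    have hTpos : 0 < T := Finset.sum_pos
      (fun x _ => mul_pos (hps x) (Real.rpow_pos_of_pos (hqpos x) _)) Finset.univ_nonempty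
    rcases lt_or_gt_of_ne hα1 with h | h
    · -- α < 1 : show T ≤ S^α, then conclude
      have hhold : T ≤ S ^ α := by
        have key := holder_split α hα0 h (fun x => p x ^ (1/α)) q
          (fun x => Real.rpow_nonneg (hps x).le _) (fun x => (hqpos x).le)
        have e : ∀ x, (p x ^ (1/α)) ^ α = p x := fun x => by
          rw [← Real.rpow_mul (hps x).le, one_div, inv_mul_cancel₀ hα0.ne', Real.rpow_one]
        simp only [e] at key
        calc T ≤ S ^ α * (∑ x, q x) ^ (1 - α) := key
          _ = S ^ α := by rw [hq.2, Real.one_rpow, mul_one]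
      have hlog : Real.log T ≤ α * Real.log S := by
        calc Real.log T ≤ Real.log (S ^ α) := Real.log_le_log hTpos hhold
          _ = α * Real.log S := Real.log_rpow hSpos α
      have hneg : 1/(α - 1) ≤ 0 := le_of_lt (div_neg_of_pos_of_neg one_pos (by linarith))
      have hm := mul_le_mul_of_nonpos_left hlog hneg
      calc α/(α-1) * Real.log S = (1/(α-1)) * (α * Real.log S) := by ring
        _ ≤ (1/(α-1)) * Real.log T := hm
        _ = 1/(α-1) * Real.log T := rfl
    · -- α > 1 : show S^α ≤ T
      have hθ0 : 0 < 1/α := by positivity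
      have hθ1 : 1/α < 1 := by rw [div_lt_one hα0]; linarith
      have hhold : S ≤ T ^ (1/α) := by
        have key := holder_split (1/α) hθ0 hθ1 (fun x => p x * q x ^ (1 - α)) q
          (fun x => mul_nonneg (hps x).le (Real.rpow_nonneg (hqpos x).le _))
          (fun x => (hqpos x).le)
        have e : ∀ x, (p x * q x ^ (1 - α)) ^ (1/α) * q x ^ (1 - 1/α)
            = p x ^ (1/α) := fun x => by
          rw [Real.mul_rpow (hps x).le (Real.rpow_nonneg (hqpos x).le _),
            ← Real.rpow_mul (hqpos x).le, mul_assoc, ← Real.rpow_add (hqpos x)]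
          have h1 : (1 - α) * (1/α) + (1 - 1/α) = 0 := by field_simp; ring
          rw [h1, Real.rpow_zero, mul_one]
        simp only [e] at key
        calc S ≤ T ^ (1/α) * (∑ x, q x) ^ (1 - 1/α) := key
          _ = T ^ (1/α) := by rw [hq.2, Real.one_rpow, mul_one]
      have hSa : S ^ α ≤ T := by
        have hr := Real.rpow_le_rpow hSpos.le hhold hα0.le
        rwa [← Real.rpow_mul hTpos.le, one_div, inv_mul_cancel₀ hα0.ne',
          Real.rpow_one] at hr
      have hlog : α * Real.log S ≤ Real.log T := by
        calc α * Real.log S = Real.log (S ^ α) := (Real.log_rpow hSpos α).symm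
          _ ≤ Real.log T := Real.log_le_log (Real.rpow_pos_of_pos hSpos α) hSa
      have hpos : 0 ≤ 1/(α - 1) := le_of_lt (div_pos one_pos (by linarith))
      have hm := mul_le_mul_of_nonneg_left hlog hpos
      calc α/(α-1) * Real.log S = (1/(α-1)) * (α * Real.log S) := by ring
        _ ≤ (1/(α-1)) * Real.log T := hm
        _ = 1/(α-1) * Real.log T := rfl
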